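/- Let R be a fusion ring graded by a finite group G, i.e., B = ⊔_{g∈G} B_g with B_g·B_h having constituents in B_{gh}, B_1 nonempty containing 1. Suppose F : R → R' is a ring homomorphism to another fusion ring sending basis elements to nonnegative combinations of basis elements, commuting with *, with B_1 = { X ∈ B : F(X) = FPdim(X)·1 }. Then every X ∈ B satisfies: F(X) = FPdim(X)·M for some basis element M of R' with M·M* = 1 (an invertible element). -/

import Mathlib

open Finset

/-- A fusion ring with distinguished basis indexed by `ι`: nonnegative integer structure
constants `N`, unit basis element `one`, involution `star`, and the Frobenius–Perron
dimension `fp`, the (unique) ring homomorphism to `ℝ` positive on the basis. -/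
structure FusionRing (ι : Type) [Fintype ι] [DecidableEq ι] where
  N : ι → ι → ι → ℕ
  one : ι
  star : ι → ι
  assoc : ∀ a b c d, ∑ x, N a b x * N x c d = ∑ x, N b c x * N a x d
  one_mul : ∀ a b, N one a b = if a = b then 1 else 0
  mul_one : ∀ a b, N a one b = if a = b then 1 else 0
  star_invol : ∀ a, star (star a) = a
  N_one : ∀ a b, N a b one = if b = star a then 1 else 0
  N_star : ∀ a b c, N a b c = N (star b) (star a) (star c)
  fp : ι → ℝ
  fp_pos : ∀ a, 0 < fp a
  fp_one : fp one = 1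
  fp_hom : ∀ a b, fp a * fp b = ∑ c, (N a b c : ℝ) * fp c

namespace FusionRing

variable {ι : Type} [Fintype ι] [DecidableEq ι] (R : FusionRing ι)

set_option linter.unusedVariables false
open scoped Classical

/-- Multiplication of `R ⊗ ℝ`, written on coefficient vectors in the basis `ι`. -/
noncomputable def mul (x y : ι → ℝ) : ι → ℝ :=
  fun c => ∑ a, ∑ b, x a * y b * (R.N a b c : ℝ)

/-- The basis element `a` viewed as a coefficient vector. -/
def e (R : FusionRing ι) (a : ι) : ι → ℝ := fun c => if c = a then 1 else 0

/-- The linear extension of the involution `*`. -/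
def starVec (x : ι → ℝ) : ι → ℝ := fun c => x (R.star c)

/-- The standard bilinear form, `m(a,b) = δ_{a,b}` on basis elements. -/
def m (R : FusionRing ι) (x y : ι → ℝ) : ℝ := ∑ a, x a * y a

/-- `S` is the basis of a fusion subring: contains the unit, closed under `*`, and closed
under taking constituents of products. -/
def IsFusionSubset (S : Finset ι) : Prop :=
  R.one ∈ S ∧ (∀ a ∈ S, R.star a ∈ S) ∧ ∀ a ∈ S, ∀ b ∈ S, ∀ c, 0 < R.N a b c → c ∈ S

/-- The regular element `R_S = ∑_{d ∈ S} FPdim(d)·d` of a fusion subset `S`. -/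
def reg (S : Finset ι) : ι → ℝ := fun c => if c ∈ S then R.fp c else 0

/-- `FPdim(S) = ∑_{d ∈ S} FPdim(d)²`. -/
def fpdimS (S : Finset ι) : ℝ := ∑ d ∈ S, R.fp d ^ 2

/-- The double coset relation relative to fusion subsets `S`, `T`:
`X ∼ Y` iff `Y` occurs with positive multiplicity in `D·X·E` for some `D ∈ S`, `E ∈ T`. -/
def dcRel (S T : Finset ι) (X Y : ι) : Prop :=
  ∃ D ∈ S, ∃ E ∈ T, 0 < ∑ a, R.N D X a * R.N a E Y

/-- `A_i = ∑_{Y ∈ Λ_i} FPdim(Y)·Y` where `Λ_i` is the double coset of `X`. -/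
noncomputable def classVec (S T : Finset ι) (X : ι) : ι → ℝ :=
  fun c => if R.dcRel S T X c then R.fp c else 0

end FusionRing


namespace FusionRing
variable {ι : Type} [Fintype ι] [DecidableEq ι] (R : FusionRing ι)

lemma frob (a b c : ι) : R.N a b (R.star c) = R.N b c (R.star a) := by
  have h := R.assoc a b c R.one
  simp only [R.N_one] at h
  have e1 : ∀ x : ι, (c = R.star x) = (x = R.star c) := fun x =>
    propext ⟨fun h => by rw [h, R.star_invol], fun h => by rw [h, R.star_invol]⟩
  simp only [e1, mul_ite, mul_one, mul_zero, Finset.sum_ite_eq', mem_univ, if_true] at h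
  simpa using h

lemma N_perm (a b c : ι) : R.N a b c = R.N (R.star a) c b := by
  rw [R.N_star a b c]
  have := R.frob (R.star b) (R.star a) c
  rw [this, R.star_invol]

lemma fp_star (a : ι) : R.fp (R.star a) = R.fp a := by
  have key : ∑ b, ∑ c, R.fp b * ((R.N a b c : ℝ) * R.fp c)
      = ∑ c, ∑ b, ((R.N a b c : ℝ) * R.fp b) * R.fp c := by
    rw [Finset.sum_comm]
    apply Finset.sum_congr rfl; intro c _
    apply Finset.sum_congr rfl; intro b _
    ring
  have h1 : ∑ b, ∑ c, R.fp b * ((R.N a b c : ℝ) * R.fp c) = R.fp a * ∑ b, R.fp b ^ 2 := by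
    rw [Finset.mul_sum]
    apply Finset.sum_congr rfl; intro b _
    rw [← Finset.mul_sum, ← R.fp_hom]; ring
  have h2 : ∑ c, ∑ b, ((R.N a b c : ℝ) * R.fp b) * R.fp c = R.fp (R.star a) * ∑ c, R.fp c ^ 2 := by
    rw [Finset.mul_sum]
    apply Finset.sum_congr rfl; intro c _
    have : ∑ b, (R.N a b c : ℝ) * R.fp b = R.fp (R.star a) * R.fp c := by
      rw [R.fp_hom (R.star a) c]
      apply Finset.sum_congr rfl; intro b _
      rw [← R.N_perm]
    rw [← Finset.sum_mul, this]; ring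
  have hS : 0 < ∑ b, R.fp b ^ 2 := by
    exact Finset.sum_pos (fun b _ => pow_pos (R.fp_pos b) 2) ⟨R.one, mem_univ _⟩
  have := h1 ▸ h2 ▸ key
  exact (mul_right_cancel₀ (ne_of_gt hS) this.symm)

lemma fp_ge_one (a : ι) : 1 ≤ R.fp a := by
  by_contra hlt
  push_neg at hlt
  set M : Matrix ι ι ℕ := fun b c => R.N a b c with hM
  have key : ∀ k : ℕ, ∀ b, ∑ c, (((M ^ k) b c : ℕ) : ℝ) * R.fp c = R.fp a ^ k * R.fp b := by
    intro k
    induction k with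
    | zero =>
      intro b
      simp only [pow_zero, Matrix.one_apply]
      rw [Finset.sum_congr rfl (fun c _ => by
        show ((if b = c then (1:ℕ) else 0 : ℕ) : ℝ) * R.fp c = if b = c then R.fp c else 0
        split <;> simp)]
      simp [Finset.sum_ite_eq]
    | succ k ih =>
      intro b
      have hpow : (M ^ (k+1)) = M * M ^ k := by rw [pow_succ']
      calc ∑ c, (((M ^ (k+1)) b c : ℕ) : ℝ) * R.fp c
          = ∑ c, ∑ x, ((M b x : ℕ) : ℝ) * (((M ^ k) x c : ℕ) : ℝ) * R.fp c := by
            apply Finset.sum_congr rfl; intro c _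
            rw [hpow]
            simp [Matrix.mul_apply, Finset.sum_mul]
        _ = ∑ x, ((M b x : ℕ) : ℝ) * ∑ c, (((M ^ k) x c : ℕ) : ℝ) * R.fp c := by
            rw [Finset.sum_comm]
            apply Finset.sum_congr rfl; intro x _
            rw [Finset.mul_sum]
            apply Finset.sum_congr rfl; intro c _; ring
        _ = R.fp a ^ k * ∑ x, ((R.N a b x : ℕ) : ℝ) * R.fp x := by
            rw [Finset.mul_sum]
            apply Finset.sum_congr rfl; intro x _
            rw [ih x, hM]; ring
        _ = R.fp a ^ (k+1) * R.fp b := by rw [← R.fp_hom]; ring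
  have hne : (univ : Finset ι).Nonempty := ⟨R.one, mem_univ _⟩
  set mlo := univ.inf' hne R.fp with hmlo
  set mhi := univ.sup' hne R.fp with hmhi
  have hmlopos : 0 < mlo := by
    obtain ⟨b, _, hb⟩ := Finset.exists_mem_eq_inf' hne R.fp
    rw [hmlo, hb]; exact R.fp_pos b
  have hmhipos : 0 < mhi := lt_of_lt_of_le (R.fp_pos R.one) (Finset.le_sup' R.fp (mem_univ R.one))
  have h0le : 0 ≤ R.fp a := le_of_lt (R.fp_pos a)
  obtain ⟨k, hk⟩ := exists_pow_lt_of_lt_one (div_pos hmlopos hmhipos) hlt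
  have hzero : ∀ b c, (M ^ k) b c = 0 := by
    intro b c
    have hle : (((M ^ k) b c : ℕ) : ℝ) * R.fp c ≤ R.fp a ^ k * R.fp b := by
      rw [← key k b]
      apply Finset.single_le_sum (f := fun c => (((M ^ k) b c : ℕ):ℝ) * R.fp c)
        (fun c _ => mul_nonneg (Nat.cast_nonneg _) (le_of_lt (R.fp_pos c))) (mem_univ c)
    have hlt1 : (((M ^ k) b c : ℕ) : ℝ) < 1 := by
      have hb1 : R.fp b ≤ mhi := Finset.le_sup' R.fp (mem_univ b)
      have hblo : R.fp a ^ k * R.fp b < mlo := by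
        have h1 : R.fp a ^ k * R.fp b ≤ R.fp a ^ k * mhi :=
          mul_le_mul_of_nonneg_left hb1 (pow_nonneg h0le k)
        have h2 : R.fp a ^ k * mhi < mlo / mhi * mhi :=
          mul_lt_mul_of_pos_right hk hmhipos
        rw [div_mul_cancel₀ _ (ne_of_gt hmhipos)] at h2
        linarith
      have hclo : mlo ≤ R.fp c := Finset.inf'_le R.fp (mem_univ c)
      have := lt_of_le_of_lt hle (lt_of_lt_of_le hblo hclo)
      by_contra hge
      push_neg at hge
      have : R.fp c ≤ (((M ^ k) b c : ℕ) : ℝ) * R.fp c := le_mul_of_one_le_left (le_of_lt (R.fp_pos c)) hge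
      linarith
    exact_mod_cast Nat.lt_one_iff.mp (by exact_mod_cast hlt1)
  have h := key k R.one
  simp only [hzero, Nat.cast_zero, zero_mul, Finset.sum_const_zero] at h
  have : 0 < R.fp a ^ k * R.fp R.one := mul_pos (pow_pos (R.fp_pos a) k) (R.fp_pos R.one)
  linarith

end FusionRing

open FusionRing in
lemma fusion_aux {ι ι' : Type} [Fintype ι] [DecidableEq ι] [Fintype ι'] [DecidableEq ι']
    (R : FusionRing ι) (R' : FusionRing ι') (Fm : ι → ι' → ℝ) (X : ι)
    (hnn : ∀ c, 0 ≤ Fm X c)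
    (hmul : R'.mul (Fm X) (Fm (R.star X)) = fun c' => ∑ c, (R.N X (R.star X) c : ℝ) * Fm c c')
    (hstar : ∀ c, Fm (R.star X) c = Fm X (R'.star c))
    (hconst : ∀ c, 0 < R.N X (R.star X) c → Fm c = R.fp c • R'.e R'.one) :
    ∃ M : ι', Fm X = R.fp X • R'.e M ∧ R'.fp M = 1 := by
  set d := R.fp X with hd_def
  have hd : 0 < d := R.fp_pos X
  have hprod : ∀ c', R'.mul (Fm X) (Fm (R.star X)) c' = d ^ 2 * R'.e R'.one c' := by
    intro c'
    simp only [hmul]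
    have step : ∀ c ∈ (univ : Finset ι), (R.N X (R.star X) c : ℝ) * Fm c c'
        = ((R.N X (R.star X) c : ℝ) * R.fp c) * R'.e R'.one c' := by
      intro c _
      rcases Nat.eq_zero_or_pos (R.N X (R.star X) c) with h0 | hp
      · simp [h0]
      · rw [hconst c hp]
        simp only [Pi.smul_apply, smul_eq_mul]
        ring
    rw [Finset.sum_congr rfl step, ← Finset.sum_mul, ← R.fp_hom, R.fp_star]
    rw [← hd_def]; ring
  have hC : ∑ a, Fm X a ^ 2 = d ^ 2 := by
    have h1 := hprod R'.one
    have h2 : R'.mul (Fm X) (Fm (R.star X)) R'.one = ∑ a, Fm X a ^ 2 := by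
      show ∑ a, ∑ b, Fm X a * Fm (R.star X) b * (R'.N a b R'.one : ℝ) = ∑ a, Fm X a ^ 2
      apply Finset.sum_congr rfl; intro a _
      rw [Finset.sum_congr rfl (fun b _ => by rw [R'.N_one a b])]
      have hb : ∀ b, Fm X a * Fm (R.star X) b * ((if b = R'.star a then 1 else 0 : ℕ) : ℝ)
          = if b = R'.star a then Fm X a * Fm (R.star X) b else 0 := by
        intro b; split <;> simp
      rw [Finset.sum_congr rfl (fun b _ => hb b),
        Finset.sum_ite_eq' univ (R'.star a) (fun b => Fm X a * Fm (R.star X) b)]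
      simp [hstar, R'.star_invol, sq]
    rw [h2] at h1
    rw [h1]
    simp [FusionRing.e]
  set s := ∑ a, Fm X a * R'.fp a with hs_def
  have hs : s * s = d ^ 2 := by
    have w1 : ∑ c', R'.mul (Fm X) (Fm (R.star X)) c' * R'.fp c' = d ^ 2 := by
      rw [Finset.sum_congr rfl (fun c' _ => by rw [hprod c'])]
      have hc' : ∀ c', d ^ 2 * R'.e R'.one c' * R'.fp c'
          = if c' = R'.one then d ^ 2 * R'.fp c' else 0 := by
        intro c'; simp only [FusionRing.e]; split <;> simp
      rw [Finset.sum_congr rfl (fun c' _ => hc' c'),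
        Finset.sum_ite_eq' univ R'.one (fun c' => d ^ 2 * R'.fp c')]
      simp [R'.fp_one]
    have w2 : ∑ c', R'.mul (Fm X) (Fm (R.star X)) c' * R'.fp c' = s * s := by
      show ∑ c', (∑ a, ∑ b, Fm X a * Fm (R.star X) b * (R'.N a b c' : ℝ)) * R'.fp c' = s * s
      have rearr : ∑ c', (∑ a, ∑ b, Fm X a * Fm (R.star X) b * (R'.N a b c' : ℝ)) * R'.fp c'
          = ∑ a, ∑ b, Fm X a * Fm (R.star X) b * ∑ c', (R'.N a b c' : ℝ) * R'.fp c' := by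
        simp only [Finset.sum_mul]
        rw [Finset.sum_comm]
        apply Finset.sum_congr rfl; intro a _
        rw [Finset.sum_comm]
        apply Finset.sum_congr rfl; intro b _
        rw [Finset.mul_sum]
        apply Finset.sum_congr rfl; intro c' _; ring
      rw [rearr]
      have hfph : ∀ a b : ι', Fm X a * Fm (R.star X) b * ∑ c', (R'.N a b c' : ℝ) * R'.fp c'
          = (Fm X a * R'.fp a) * (Fm (R.star X) b * R'.fp b) := by
        intro a b; rw [← R'.fp_hom]; ring
      rw [Finset.sum_congr rfl (fun a _ => Finset.sum_congr rfl (fun b _ => hfph a b))]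
      rw [← Finset.sum_mul_sum]
      have e2 : ∑ b, Fm (R.star X) b * R'.fp b = s := by
        calc ∑ b, Fm (R.star X) b * R'.fp b
            = ∑ b, Fm X (R'.star b) * R'.fp b := by simp only [hstar]
          _ = ∑ b, Fm X b * R'.fp (R'.star b) :=
              Fintype.sum_bijective R'.star (Function.Involutive.bijective R'.star_invol)
                _ _ (fun b => by rw [R'.star_invol])
          _ = s := by simp only [FusionRing.fp_star]; exact hs_def.symm
      rw [e2]
    rw [← w2, w1]
  have hs0 : 0 ≤ s := Finset.sum_nonneg fun a _ => mul_nonneg (hnn a) (le_of_lt (R'.fp_pos a))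
  have hsd : s = d := by
    have hfac : (s - d) * (s + d) = 0 := by
      have : (s - d) * (s + d) = s * s - d ^ 2 := by ring
      rw [this, hs, sub_self]
    rcases mul_eq_zero.mp hfac with h | h
    · linarith
    · linarith
  set σ := ∑ a, Fm X a with hσ_def
  have hσs : σ ≤ s := Finset.sum_le_sum fun a _ =>
    le_mul_of_one_le_right (hnn a) (FusionRing.fp_ge_one R' a)
  have hσ0 : 0 ≤ σ := Finset.sum_nonneg fun a _ => hnn a
  have hva_le : ∀ a, Fm X a ≤ σ := fun a =>
    Finset.single_le_sum (f := fun a => Fm X a) (fun b _ => hnn b) (mem_univ a)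
  have hsq : ∑ a, Fm X a ^ 2 ≤ σ * σ := by
    calc ∑ a, Fm X a ^ 2 ≤ ∑ a, Fm X a * σ := Finset.sum_le_sum fun a _ => by
          rw [sq]; exact mul_le_mul_of_nonneg_left (hva_le a) (hnn a)
      _ = σ * σ := by rw [← Finset.sum_mul]
  have hσd : σ = d := by
    have h1 : d ^ 2 ≤ σ * σ := hC ▸ hsq
    have hσled : σ ≤ d := hsd ▸ hσs
    nlinarith
  have hzero_terms : ∀ a, Fm X a * (σ - Fm X a) = 0 := by
    have htot : ∑ a, Fm X a * (σ - Fm X a) = 0 := by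
      have hexp : ∑ a, Fm X a * (σ - Fm X a) = σ * σ - ∑ a, Fm X a ^ 2 := by
        have hpt : ∀ a : ι', Fm X a * (σ - Fm X a) = Fm X a * σ - Fm X a ^ 2 := fun a => by ring
        simp only [hpt]
        rw [Finset.sum_sub_distrib, ← Finset.sum_mul]
      rw [hexp, hC, hσd]; ring
    intro a
    exact (Finset.sum_eq_zero_iff_of_nonneg fun a _ =>
      mul_nonneg (hnn a) (sub_nonneg.mpr (hva_le a))).mp htot a (mem_univ a)
  have hexM : ∃ M, Fm X M ≠ 0 := by
    by_contra hall
    push_neg at hall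
    have : σ = 0 := Finset.sum_eq_zero fun a _ => hall a
    rw [hσd] at this; linarith
  obtain ⟨M, hM⟩ := hexM
  have hvM : Fm X M = σ := by
    rcases mul_eq_zero.mp (hzero_terms M) with h | h
    · exact absurd h hM
    · linarith
  have hva0 : ∀ a, a ≠ M → Fm X a = 0 := by
    intro a ha
    by_contra h0
    have hva : Fm X a = σ := by
      rcases mul_eq_zero.mp (hzero_terms a) with h | h
      · exact absurd h h0
      · linarith
    have hle2 : Fm X a + Fm X M ≤ σ := by
      have hsub := Finset.sum_le_sum_of_subset_of_nonneg
        (Finset.subset_univ ({a, M} : Finset ι')) (fun b _ _ => hnn b)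
      rwa [Finset.sum_pair ha] at hsub
    rw [hva, hvM] at hle2
    have : σ = d := hσd
    linarith
  have hfun : Fm X = d • R'.e M := by
    funext c
    simp only [Pi.smul_apply, smul_eq_mul, FusionRing.e]
    by_cases hc : c = M
    · rw [hc, if_pos rfl, hvM, hσd, _root_.mul_one]
    · rw [if_neg hc, hva0 c hc, mul_zero]
  refine ⟨M, hfun, ?_⟩
  have hsM : s = d * R'.fp M := by
    rw [hs_def]
    have : ∀ a, Fm X a * R'.fp a = if a = M then d * R'.fp a else 0 := by
      intro a
      by_cases hc : a = M
      · rw [if_pos hc, hc, hvM, hσd]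
      · rw [if_neg hc, hva0 a hc, zero_mul]
    rw [Finset.sum_congr rfl (fun a _ => this a),
      Finset.sum_ite_eq' univ M (fun a => d * R'.fp a)]
    simp
  rw [hsd] at hsM
  have := mul_left_cancel₀ (ne_of_gt hd) (by rw [← hsM, _root_.mul_one] : d * 1 = d * R'.fp M)
  exact this.symm

/-- Let `R` be a fusion ring graded by a finite group `G` (via `deg`), and let `F` be a
ring homomorphism to a fusion ring `R'` given on basis elements by the nonnegative
coefficient matrix `Fm`, commuting with `*`, whose kernel
`{ X : F(X) = FPdim(X)·1 }` is exactly the trivial component `B₁`. Then every basis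
element `X` satisfies `F(X) = FPdim(X)·M` for some basis element `M` of `R'` with
`M·M* = 1` (an invertible element). -/
theorem graded_normal_image {ι ι' G : Type} [Fintype ι] [DecidableEq ι]
    [Fintype ι'] [DecidableEq ι'] [Group G] [Finite G]
    (R : FusionRing ι) (R' : FusionRing ι')
    (deg : ι → G)
    (hdeg_one : deg R.one = 1)
    (hdeg_mul : ∀ a b c, 0 < R.N a b c → deg c = deg a * deg b)
    (hdeg_star : ∀ a, deg (R.star a) = (deg a)⁻¹)
    (Fm : ι → ι' → ℝ)
    (hF_nonneg : ∀ a c, 0 ≤ Fm a c)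
    (hF_one : Fm R.one = R'.e R'.one)
    (hF_mul : ∀ a b, R'.mul (Fm a) (Fm b) = fun c' => ∑ c, (R.N a b c : ℝ) * Fm c c')
    (hF_star : ∀ a c, Fm (R.star a) c = Fm a (R'.star c))
    (hker : ∀ X : ι, deg X = 1 ↔ Fm X = R.fp X • R'.e R'.one) :
    ∀ X : ι, ∃ M : ι',
      (∀ c, R'.N M (R'.star M) c = if c = R'.one then 1 else 0) ∧
      Fm X = R.fp X • R'.e M := by
  intro X
  have hconstX : ∀ c, 0 < R.N X (R.star X) c → Fm c = R.fp c • R'.e R'.one := by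
    intro c hc
    apply (hker c).mp
    rw [hdeg_mul _ _ _ hc, hdeg_star, mul_inv_cancel]
  obtain ⟨M, hM1, hM2⟩ := fusion_aux R R' Fm X (hF_nonneg X)
    (hF_mul X (R.star X)) (hF_star X) hconstX
  have hconstX' : ∀ c, 0 < R.N (R.star X) (R.star (R.star X)) c →
      Fm c = R.fp c • R'.e R'.one := by
    intro c hc
    apply (hker c).mp
    rw [hdeg_mul _ _ _ hc, hdeg_star, hdeg_star, hdeg_star, inv_inv, inv_mul_cancel]
  obtain ⟨M', hM'1, hM'2⟩ := fusion_aux R R' Fm (R.star X) (hF_nonneg (R.star X))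
    (hF_mul (R.star X) (R.star (R.star X))) (hF_star (R.star X)) hconstX'
  have hd : 0 < R.fp X := R.fp_pos X
  -- identify M' with star M
  have heval1 : Fm (R.star X) (R'.star M) = R.fp X := by
    rw [hF_star X (R'.star M), R'.star_invol, congrFun hM1 M]
    simp [FusionRing.e]
  have heval2 : Fm (R.star X) (R'.star M) = R.fp X * (if R'.star M = M' then 1 else 0) := by
    rw [congrFun hM'1 (R'.star M)]
    simp only [Pi.smul_apply, smul_eq_mul, FusionRing.e, R.fp_star]
  have hMM' : R'.star M = M' := by
    by_contra hne
    rw [heval1, if_neg hne, mul_zero] at heval2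
    linarith
  have hstarM : R'.fp (R'.star M) = 1 := by rw [hMM']; exact hM'2
  refine ⟨M, ?_, hM1⟩
  have hsum : ∑ c, (R'.N M (R'.star M) c : ℝ) * R'.fp c = 1 := by
    rw [← R'.fp_hom, hM2, hstarM, _root_.mul_one]
  have honeN : R'.N M (R'.star M) R'.one = 1 := by rw [R'.N_one]; simp
  intro c
  by_cases hc : c = R'.one
  · rw [hc, if_pos rfl, honeN]
  · rw [if_neg hc]
    have hsplit : (R'.N M (R'.star M) R'.one : ℝ) * R'.fp R'.one
        + ∑ x ∈ univ.erase R'.one, (R'.N M (R'.star M) x : ℝ) * R'.fp x = 1 := by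
      exact (Finset.add_sum_erase univ
        (fun x => (R'.N M (R'.star M) x : ℝ) * R'.fp x) (mem_univ R'.one)).trans hsum
    have hone1 : (R'.N M (R'.star M) R'.one : ℝ) * R'.fp R'.one = 1 := by
      rw [honeN, R'.fp_one]; norm_num
    have hrest : ∑ x ∈ univ.erase R'.one, (R'.N M (R'.star M) x : ℝ) * R'.fp x = 0 := by
      rw [hone1] at hsplit; linarith
    have hterm := (Finset.sum_eq_zero_iff_of_nonneg fun x _ =>
      mul_nonneg (Nat.cast_nonneg _) (le_of_lt (R'.fp_pos x))).mp hrest c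
      (Finset.mem_erase.mpr ⟨hc, mem_univ c⟩)
    have hN : (R'.N M (R'.star M) c : ℝ) = 0 := by
      rcases mul_eq_zero.mp hterm with h | h
      · exact h
      · exact absurd h (ne_of_gt (R'.fp_pos c))
    exact_mod_cast hN
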